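/- Let ξ ∈ ℝ³ with ξ ≠ 0 and let x ∈ ℝ³ be such that x ≠ tξ for every t ≥ 0. Then the function t ↦ ⟨A(x − tξ), ξ⟩ is integrable on [0,∞), and the incoming phase Φ₋(x,ξ) := ∫₀^∞ ⟨A(x − tξ), ξ⟩ dt satisfies Φ₋(x,ξ) = ∫_{π−φ_ξ}^{φ_x} a(φ) dφ, where φ_ξ = arccos(ξ₃/|ξ|) (note that the colatitude of −ξ is π − φ_ξ). -/

import Mathlib

open Real MeasureTheory Filter
open scoped RealInnerProductSpace Topology

noncomputable section

/-- `ℝ³` as a Euclidean space. -/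
abbrev E3 := EuclideanSpace ℝ (Fin 3)

/-- The colatitude `φ_x = arccos(x₃/|x|)` of a point of `ℝ³`. -/
def colat (x : E3) : ℝ := Real.arccos (x 2 / ‖x‖)

/-- The unit vector `e_{φ_x}` of spherical coordinates. -/
def ephi (x : E3) : E3 :=
  (1 / ‖x‖) • (WithLp.equiv 2 (Fin 3 → ℝ)).symm
    ![x 0 * x 2 / Real.sqrt ((x 0)^2 + (x 1)^2),
      x 1 * x 2 / Real.sqrt ((x 0)^2 + (x 1)^2),
      - Real.sqrt ((x 0)^2 + (x 1)^2)]

/-- The magnetic potential `A(x) = (a(φ_x)/|x|) e_{φ_x}` (set to `0` on the `x₃`-axis). -/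
def magA (a : ℝ → ℝ) (x : E3) : E3 :=
  if 0 < (x 0)^2 + (x 1)^2 then (a (colat x) / ‖x‖) • ephi x else 0

lemma E3_norm_sq (u : E3) : ‖u‖^2 = (u 0)^2 + (u 1)^2 + (u 2)^2 := by
  rw [EuclideanSpace.norm_eq, Real.sq_sqrt (by positivity)]
  simp [Fin.sum_univ_three]

lemma inner_magA (a : ℝ → ℝ) (y ξ : E3) :
    ⟪magA a y, ξ⟫ = if 0 < (y 0)^2 + (y 1)^2 then
      a (colat y) * (y 0 * y 2 * ξ 0 + y 1 * y 2 * ξ 1 - ((y 0)^2 + (y 1)^2) * ξ 2)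
        / (‖y‖^2 * Real.sqrt ((y 0)^2 + (y 1)^2)) else 0 := by
  unfold magA
  split_ifs with h
  · have hy : y ≠ 0 := by
      intro h0; rw [h0] at h; simp at h
    have hny : (0:ℝ) < ‖y‖ := norm_pos_iff.mpr hy
    have hs : (0:ℝ) < Real.sqrt ((y 0)^2 + (y 1)^2) := Real.sqrt_pos.mpr h
    have hs2 : Real.sqrt ((y 0)^2 + (y 1)^2) ^ 2 = (y 0)^2 + (y 1)^2 :=
      Real.sq_sqrt h.le
    have hinner : ∀ u v : E3, ⟪u,v⟫ = u 0 * v 0 + u 1 * v 1 + u 2 * v 2 := by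
      intro u v
      simp [PiLp.inner_apply, Fin.sum_univ_three, RCLike.inner_apply]
      ring
    rw [hinner]
    simp only [ephi, PiLp.smul_apply, smul_eq_mul]
    have hv : ∀ (f : Fin 3 → ℝ) (i : Fin 3), ((WithLp.equiv 2 (Fin 3 → ℝ)).symm f) i = f i :=
      fun _ _ => rfl
    simp only [hv]
    simp only [Matrix.cons_val_zero, Matrix.cons_val_one, Matrix.head_cons,
      Matrix.cons_val_two, Matrix.tail_cons]
    field_simp
    linear_combination (-(a (colat y)) * ξ 2) * hs2
  · simp

lemma comp_sub_smul (x ξ : E3) (t : ℝ) (i : Fin 3) : (x - t • ξ) i = x i - t * ξ i := by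
  simp

lemma hasDerivAt_phif (x ξ : E3) (t : ℝ) (h0 : x - t • ξ ≠ 0)
    (hax : 0 < (x 0 - t*ξ 0)^2 + (x 1 - t*ξ 1)^2) :
    HasDerivAt (fun u : ℝ => Real.arccos ((x 2 - u * ξ 2) / ‖x - u • ξ‖))
      ((((x 0 - t*ξ 0)^2 + (x 1 - t*ξ 1)^2) * ξ 2
        - (x 0 - t*ξ 0) * (x 2 - t*ξ 2) * ξ 0 - (x 1 - t*ξ 1) * (x 2 - t*ξ 2) * ξ 1)
        / (‖x - t • ξ‖^2 * Real.sqrt ((x 0 - t*ξ 0)^2 + (x 1 - t*ξ 1)^2))) t := by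
  have hnormt : ∀ u : ℝ, ‖x - u • ξ‖ =
      Real.sqrt ((x 0 - u*ξ 0)^2 + (x 1 - u*ξ 1)^2 + (x 2 - u*ξ 2)^2) := by
    intro u
    rw [EuclideanSpace.norm_eq]
    congr 1
    simp [Fin.sum_univ_three, comp_sub_smul]
  have hrt : (0:ℝ) < ‖x - t • ξ‖ := norm_pos_iff.mpr h0
  have hq2 : ‖x - t • ξ‖^2 = (x 0 - t*ξ 0)^2 + (x 1 - t*ξ 1)^2 + (x 2 - t*ξ 2)^2 := by
    rw [E3_norm_sq]; simp [comp_sub_smul]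
  set r := ‖x - t • ξ‖ with hrdef
  set s := Real.sqrt ((x 0 - t*ξ 0)^2 + (x 1 - t*ξ 1)^2) with hsdef
  have hs : 0 < s := Real.sqrt_pos.mpr hax
  have hs2 : s^2 = (x 0 - t*ξ 0)^2 + (x 1 - t*ξ 1)^2 := Real.sq_sqrt hax.le
  have hyd : ∀ i : Fin 3, HasDerivAt (fun u : ℝ => x i - u * ξ i) (-ξ i) t := fun i => by
    simpa using ((hasDerivAt_id t).mul_const (ξ i)).const_sub (x i)
  have hqd : HasDerivAt (fun u : ℝ => (x 0 - u*ξ 0)^2 + (x 1 - u*ξ 1)^2 + (x 2 - u*ξ 2)^2)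
      (-(2*(x 0 - t*ξ 0)*ξ 0 + 2*(x 1 - t*ξ 1)*ξ 1 + 2*(x 2 - t*ξ 2)*ξ 2)) t := by
    have h0' := (hyd 0).pow 2
    have h1' := (hyd 1).pow 2
    have h2' := (hyd 2).pow 2
    refine ((h0'.add h1').add h2').congr_deriv ?_
    push_cast; ring
  have hq0 : (x 0 - t*ξ 0)^2 + (x 1 - t*ξ 1)^2 + (x 2 - t*ξ 2)^2 ≠ 0 := by
    rw [← hq2]; positivity
  have hrd : HasDerivAt (fun u : ℝ => ‖x - u • ξ‖)
      (-((x 0 - t*ξ 0)*ξ 0 + (x 1 - t*ξ 1)*ξ 1 + (x 2 - t*ξ 2)*ξ 2) / r) t := by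
    have h := (Real.hasDerivAt_sqrt hq0).comp t hqd
    rw [show (fun u : ℝ => ‖x - u • ξ‖)
      = fun u => Real.sqrt ((x 0 - u*ξ 0)^2 + (x 1 - u*ξ 1)^2 + (x 2 - u*ξ 2)^2) from
      funext hnormt]
    refine h.congr_deriv ?_
    rw [show Real.sqrt ((x 0 - t*ξ 0)^2 + (x 1 - t*ξ 1)^2 + (x 2 - t*ξ 2)^2) = r from
      (hnormt t).symm]
    field_simp
  have hh : HasDerivAt (fun u : ℝ => (x 2 - u * ξ 2) / ‖x - u • ξ‖)
      (((-ξ 2) * r - (x 2 - t*ξ 2) *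
        (-((x 0 - t*ξ 0)*ξ 0 + (x 1 - t*ξ 1)*ξ 1 + (x 2 - t*ξ 2)*ξ 2) / r)) / r^2) t :=
    (hyd 2).div hrd (ne_of_gt hrt)
  have habs : ((x 2 - t*ξ 2) / r)^2 < 1 := by
    rw [div_pow, div_lt_one (by positivity)]
    nlinarith [hq2, hax]
  have hne1 : (x 2 - t*ξ 2) / r ≠ 1 := by intro e; rw [e] at habs; norm_num at habs
  have hnem1 : (x 2 - t*ξ 2) / r ≠ -1 := by intro e; rw [e] at habs; norm_num at habs
  have harc := (Real.hasDerivAt_arccos hnem1 hne1).comp t hh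
  refine harc.congr_deriv ?_
  symm
  have h1ms : 1 - ((x 2 - t*ξ 2) / r)^2 = s^2 / r^2 := by
    rw [hs2]
    field_simp
    linear_combination hq2
  have hsq : Real.sqrt (1 - ((x 2 - t*ξ 2) / r)^2) = s / r := by
    rw [h1ms, Real.sqrt_div (sq_nonneg s), Real.sqrt_sq hs.le, Real.sqrt_sq hrt.le]
  rw [hsq]
  field_simp
  linear_combination (-(ξ 2)) * hq2


lemma abs_inner_magA_le (a : ℝ → ℝ) (M : ℝ) (hM : ∀ u, |a u| ≤ M)
    (x ξ : E3) (t : ℝ) (h0 : x - t • ξ ≠ 0) :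
    |⟪magA a (x - t • ξ), ξ⟫| ≤
      M * Real.sqrt ((x 2 * ξ 0 - x 0 * ξ 2)^2 + (x 2 * ξ 1 - x 1 * ξ 2)^2) / ‖x - t • ξ‖^2 := by
  have hM0 : 0 ≤ M := (abs_nonneg _).trans (hM 0)
  set y := x - t • ξ with hy
  set C0 := x 2 * ξ 0 - x 0 * ξ 2 with hC0
  set C1 := x 2 * ξ 1 - x 1 * ξ 2 with hC1
  set K := Real.sqrt (C0^2 + C1^2) with hK
  have hK0 : 0 ≤ K := Real.sqrt_nonneg _
  have hny : (0:ℝ) < ‖y‖ := norm_pos_iff.mpr h0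
  rw [inner_magA]
  split_ifs with h
  · set s := Real.sqrt ((y 0)^2 + (y 1)^2) with hs'
    have hs : (0:ℝ) < s := Real.sqrt_pos.mpr h
    have hn : y 0 * y 2 * ξ 0 + y 1 * y 2 * ξ 1 - ((y 0)^2 + (y 1)^2) * ξ 2
        = y 0 * C0 + y 1 * C1 := by
      simp only [hy, comp_sub_smul, hC0, hC1]; ring
    have hnsq : (y 0 * C0 + y 1 * C1)^2 ≤ ((y 0)^2 + (y 1)^2) * (C0^2 + C1^2) := by
      nlinarith [sq_nonneg (y 0 * C1 - y 1 * C0)]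
    have habs : |y 0 * C0 + y 1 * C1| ≤ s * K := by
      rw [← Real.sqrt_sq_eq_abs, hs', hK, ← Real.sqrt_mul (by positivity)]
      exact Real.sqrt_le_sqrt hnsq
    rw [hn, abs_div, abs_mul]
    have hden : |‖y‖^2 * s| = ‖y‖^2 * s := abs_of_pos (by positivity)
    rw [hden]
    have hnum : |a (colat y)| * |y 0 * C0 + y 1 * C1| ≤ M * K * s := by
      calc |a (colat y)| * |y 0 * C0 + y 1 * C1| ≤ M * (s * K) :=
            mul_le_mul (hM _) habs (abs_nonneg _) hM0
        _ = M * K * s := by ring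
    calc |a (colat y)| * |y 0 * C0 + y 1 * C1| / (‖y‖^2 * s)
        ≤ (M * K * s) / (‖y‖^2 * s) := by
          apply div_le_div₀ (by positivity) hnum (by positivity) le_rfl
      _ = M * K / ‖y‖^2 := mul_div_mul_right _ _ (ne_of_gt hs)
  · simp only [abs_zero]
    positivity

/-- For `ξ ≠ 0` and `x` not on the outgoing ray `{tξ : t ≥ 0}`, the function
`t ↦ ⟨A(x − tξ), ξ⟫` is integrable on `[0,∞)` and the incoming phase
`Φ₋(x,ξ) = ∫₀^∞ ⟨A(x−tξ), ξ⟩ dt` equals `∫_{π−φ_ξ}^{φ_x} a(φ) dφ` (note that `π − φ_ξ` is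
the colatitude of `−ξ`). -/
theorem incoming_phase_eq (a : ℝ → ℝ) (ha : ContDiff ℝ (⊤ : ℕ∞) a)
    (hpos : ∀ t, 0 ≤ a t) (hcs : HasCompactSupport a)
    (hsupp : tsupport a ⊆ Set.Ioo 0 Real.pi)
    (ξ x : E3) (hξ : ξ ≠ 0) (hx : ∀ t : ℝ, 0 ≤ t → x ≠ t • ξ) :
    IntegrableOn (fun t : ℝ => ⟪magA a (x - t • ξ), ξ⟫) (Set.Ici 0) ∧
    (∫ t in Set.Ici (0:ℝ), ⟪magA a (x - t • ξ), ξ⟫) =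
      ∫ φ in (Real.pi - colat ξ)..(colat x), a φ := by
  have hξn : (0:ℝ) < ‖ξ‖ := norm_pos_iff.mpr hξ
  set g : ℝ → ℝ := fun t => ⟪magA a (x - t • ξ), ξ⟫ with hgdef
  have hy0 : ∀ t : ℝ, 0 ≤ t → x - t • ξ ≠ 0 := by
    intro t ht h0
    exact hx t ht (by rwa [sub_eq_zero] at h0)
  have hr : ∀ t : ℝ, 0 ≤ t → (0:ℝ) < ‖x - t • ξ‖ := fun t ht => norm_pos_iff.mpr (hy0 t ht)
  obtain ⟨M, hM⟩ : ∃ M : ℝ, ∀ u, |a u| ≤ M := by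
    obtain ⟨M, hM⟩ := hcs.exists_bound_of_continuous ha.continuous
    exact ⟨M, fun u => by simpa using hM u⟩
  have hM0 : 0 ≤ M := (abs_nonneg _).trans (hM 0)
  -- lower bound on the norm
  obtain ⟨ε, hε, hεb⟩ : ∃ ε : ℝ, 0 < ε ∧ ∀ t : ℝ, 0 ≤ t → ε * (1+t) ≤ ‖x - t • ξ‖ := by
    have hT : (0:ℝ) < 2*‖x‖/‖ξ‖ + 1 := by positivity
    set T := 2*‖x‖/‖ξ‖ + 1 with hT'
    have hne : (Set.Icc (0:ℝ) T).Nonempty := Set.nonempty_Icc.mpr hT.le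
    have hcont : ContinuousOn (fun t : ℝ => ‖x - t • ξ‖) (Set.Icc 0 T) :=
      ((continuous_const.sub (continuous_id.smul continuous_const)).norm).continuousOn
    obtain ⟨t₀, ht₀mem, ht₀⟩ := isCompact_Icc.exists_isMinOn hne hcont
    set m := ‖x - t₀ • ξ‖ with hm'
    have hm : 0 < m := hr t₀ ht₀mem.1
    refine ⟨min (m/(1+T)) (‖ξ‖/2), lt_min (by positivity) (by positivity), ?_⟩
    intro t ht
    rcases le_or_gt t T with h | h
    · have h1 : m ≤ ‖x - t • ξ‖ := isMinOn_iff.mp ht₀ t ⟨ht, h⟩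
      have h2 : min (m/(1+T)) (‖ξ‖/2) * (1+t) ≤ (m/(1+T)) * (1+T) := by
        apply mul_le_mul (min_le_left _ _) (by linarith) (by linarith) (by positivity)
      have h3 : (m/(1+T)) * (1+T) = m := by field_simp
      linarith
    · have h1 : t * ‖ξ‖ - ‖x‖ ≤ ‖x - t • ξ‖ := by
        have h4 := norm_sub_norm_le (t • ξ) x
        rw [norm_smul, Real.norm_eq_abs, abs_of_nonneg ht, norm_sub_rev] at h4
        linarith
      have h2 : min (m/(1+T)) (‖ξ‖/2) * (1+t) ≤ (‖ξ‖/2) * (1+t) :=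
        mul_le_mul_of_nonneg_right (min_le_right _ _) (by linarith)
      have h3 : (‖ξ‖/2) * (1+t) ≤ t * ‖ξ‖ - ‖x‖ := by
        have h5 : 2*‖x‖ < (t-1) * ‖ξ‖ := by
          rw [hT'] at h
          have h6 : 2*‖x‖/‖ξ‖ < t - 1 := by linarith
          have := (div_lt_iff₀ hξn).mp h6
          linarith
        nlinarith
      linarith
  -- the dominating function is integrable
  have hdom : IntegrableOn (fun t : ℝ =>
      M * Real.sqrt ((x 2 * ξ 0 - x 0 * ξ 2)^2 + (x 2 * ξ 1 - x 1 * ξ 2)^2) / (ε * (1+t))^2)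
      (Set.Ioi 0) := by
    have hbase : IntegrableOn (fun t : ℝ => ((1+t)^2)⁻¹) (Set.Ioi 0) := by
      have hderiv : ∀ u ∈ Set.Ioi (0:ℝ),
          HasDerivAt (fun t : ℝ => -((1+t)⁻¹)) (((1+u)^2)⁻¹) u := by
        intro u hu
        have h1 : (1:ℝ) + u ≠ 0 := by have : (0:ℝ) < u := hu; positivity
        have h2 := (((hasDerivAt_id u).const_add 1).inv h1).neg
        refine h2.congr_deriv ?_
        field_simp
        simp [id, h1]
      have hcont : ContinuousWithinAt (fun t : ℝ => -((1+t)⁻¹)) (Set.Ici 0) 0 := by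
        apply ContinuousAt.continuousWithinAt
        have h3 : ContinuousAt (fun t : ℝ => (1:ℝ)+t) 0 := by fun_prop
        exact (h3.inv₀ (by norm_num)).neg
      have htend : Tendsto (fun t : ℝ => -((1+t)⁻¹)) atTop (𝓝 0) := by
        have h4 : Tendsto (fun t : ℝ => (1:ℝ)+t) atTop atTop :=
          tendsto_atTop_add_const_left _ 1 tendsto_id
        have := (tendsto_inv_atTop_zero.comp h4).neg
        simpa using this
      exact integrableOn_Ioi_deriv_of_nonneg hcont hderiv (fun u hu => by positivity) htend
    have h5 : IntegrableOn (fun t : ℝ =>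
        (M * Real.sqrt ((x 2 * ξ 0 - x 0 * ξ 2)^2 + (x 2 * ξ 1 - x 1 * ξ 2)^2))/ε^2
          * ((1+t)^2)⁻¹) (Set.Ioi 0) :=
      hbase.const_mul _
    refine IntegrableOn.congr_fun h5 (fun t ht => ?_) measurableSet_Ioi
    have ht0 : (0:ℝ) < t := ht
    have h1t : (1:ℝ) + t ≠ 0 := by positivity
    rw [← div_eq_mul_inv, div_div, mul_pow]
  -- measurability
  have hmeas : AEStronglyMeasurable g (volume.restrict (Set.Ioi 0)) := by
    have hgeq : g = fun t : ℝ => if 0 < (x 0 - t*ξ 0)^2 + (x 1 - t*ξ 1)^2 then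
        a (Real.arccos ((x 2 - t*ξ 2) / ‖x - t • ξ‖)) *
          ((x 0 - t*ξ 0) * (x 2 - t*ξ 2) * ξ 0 + (x 1 - t*ξ 1) * (x 2 - t*ξ 2) * ξ 1
            - ((x 0 - t*ξ 0)^2 + (x 1 - t*ξ 1)^2) * ξ 2)
          / (‖x - t • ξ‖^2 * Real.sqrt ((x 0 - t*ξ 0)^2 + (x 1 - t*ξ 1)^2)) else 0 := by
      funext t
      have hgt : g t = ⟪magA a (x - t • ξ), ξ⟫ := rfl
      rw [hgt, inner_magA]
      simp only [comp_sub_smul, colat]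
    rw [hgeq]
    have hnc : Continuous (fun t : ℝ => ‖x - t • ξ‖) :=
      (continuous_const.sub (continuous_id.smul continuous_const)).norm
    apply Measurable.aestronglyMeasurable
    apply Measurable.ite
    · exact measurableSet_lt measurable_const (by fun_prop)
    · have h6 : Measurable (fun t : ℝ => a (Real.arccos ((x 2 - t*ξ 2) / ‖x - t • ξ‖))) :=
        ha.continuous.measurable.comp (Real.continuous_arccos.measurable.comp
          ((measurable_const.sub (measurable_id.mul measurable_const)).div hnc.measurable))
      have h7 : Measurable (fun t : ℝ => Real.sqrt ((x 0 - t*ξ 0)^2 + (x 1 - t*ξ 1)^2)) :=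
        Real.continuous_sqrt.measurable.comp (by fun_prop)
      have h8 : Measurable (fun t : ℝ => ‖x - t • ξ‖^2) := hnc.measurable.pow_const 2
      exact (h6.mul (by fun_prop)).div (h8.mul h7)
    · exact measurable_const
  -- integrability
  have hbound : ∀ t : ℝ, 0 ≤ t → |g t| ≤
      M * Real.sqrt ((x 2 * ξ 0 - x 0 * ξ 2)^2 + (x 2 * ξ 1 - x 1 * ξ 2)^2) / (ε * (1+t))^2 := by
    intro t ht
    refine (abs_inner_magA_le a M hM x ξ t (hy0 t ht)).trans ?_
    have h2 : (ε*(1+t))^2 ≤ ‖x - t • ξ‖^2 := pow_le_pow_left₀ (by positivity) (hεb t ht) 2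
    exact div_le_div₀ (by positivity) le_rfl (by positivity) h2
  have hint : IntegrableOn g (Set.Ioi 0) := by
    refine Integrable.mono hdom hmeas ?_
    filter_upwards [ae_restrict_mem measurableSet_Ioi] with t ht
    rw [Real.norm_eq_abs, Real.norm_eq_abs]
    exact (hbound t (le_of_lt ht)).trans (le_abs_self _)
  -- the primitive
  set F : ℝ → ℝ := fun u => ∫ φ in (Real.pi - colat ξ)..u, a φ with hFdef
  have hFcont : Continuous F :=
    intervalIntegral.continuous_primitive (fun c d => ha.continuous.intervalIntegrable c d) _
  have hFd : ∀ u, HasDerivAt F (a u) u := by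
    intro u
    exact intervalIntegral.integral_hasDerivAt_right (ha.continuous.intervalIntegrable _ _)
      ha.continuous.stronglyMeasurable.stronglyMeasurableAtFilter
      ha.continuous.continuousAt
  set φf : ℝ → ℝ := fun t => Real.arccos ((x 2 - t * ξ 2) / ‖x - t • ξ‖) with hφfdef
  have hφeq : ∀ t : ℝ, colat (x - t • ξ) = φf t := by
    intro t; simp [colat, φf, comp_sub_smul]
  set G : ℝ → ℝ := fun t => F (φf t) with hGdef
  have hφcont : ContinuousOn φf (Set.Ici 0) := by
    apply Real.continuous_arccos.comp_continuousOn
    apply ContinuousOn.div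
    · exact (continuous_const.sub (continuous_id.mul continuous_const)).continuousOn
    · exact (continuous_const.sub (continuous_id.smul continuous_const)).norm.continuousOn
    · intro t ht; exact ne_of_gt (hr t ht)
  have hGcont : ContinuousOn G (Set.Ici 0) := hFcont.comp_continuousOn hφcont
  -- the limit at infinity
  have hφlim : Tendsto φf atTop (𝓝 (Real.pi - colat ξ)) := by
    have hd : Tendsto (fun t : ℝ => ‖(1/t) • x - ξ‖) atTop (𝓝 ‖ξ‖) := by
      have h1 : Tendsto (fun t : ℝ => 1/t) atTop (𝓝 0) := by
        simpa [one_div] using (tendsto_inv_atTop_zero : Tendsto (fun t : ℝ => t⁻¹) atTop (𝓝 0))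
      have h2 : Continuous (fun c : ℝ => ‖c • x - ξ‖) :=
        ((continuous_id.smul continuous_const).sub continuous_const).norm
      have h3 := (h2.tendsto 0).comp h1
      simpa [Function.comp_def] using h3
    have hn : Tendsto (fun t : ℝ => x 2 / t - ξ 2) atTop (𝓝 (-ξ 2)) := by
      have h4 : Tendsto (fun t : ℝ => x 2 / t) atTop (𝓝 0) :=
        Tendsto.div_atTop tendsto_const_nhds tendsto_id
      simpa using h4.sub_const (ξ 2)
    have hq : Tendsto (fun t : ℝ => (x 2 / t - ξ 2) / ‖(1/t) • x - ξ‖) atTop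
        (𝓝 (-ξ 2 / ‖ξ‖)) := hn.div hd (ne_of_gt hξn)
    have heq : ∀ᶠ t in atTop, (x 2 / t - ξ 2) / ‖(1/t) • x - ξ‖
        = (x 2 - t * ξ 2) / ‖x - t • ξ‖ := by
      filter_upwards [eventually_gt_atTop 0] with t ht
      have htne : t ≠ 0 := ne_of_gt ht
      have h1 : ‖x - t • ξ‖ = t * ‖(1/t) • x - ξ‖ := by
        rw [show x - t • ξ = t • ((1/t) • x - ξ) by
          rw [smul_sub, smul_smul]; field_simp; simp]
        rw [norm_smul, Real.norm_eq_abs, abs_of_pos ht]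
      rw [h1, ← div_div]
      congr 1
      field_simp
    have hten := hq.congr' heq
    have harc := (Real.continuous_arccos.tendsto _).comp hten
    have hval : Real.arccos (-ξ 2 / ‖ξ‖) = Real.pi - colat ξ := by
      rw [neg_div, Real.arccos_neg, colat]
    rw [← hval]
    simpa [Function.comp_def, φf] using harc
  have hGlim : Tendsto G atTop (𝓝 0) := by
    have h0 : F (Real.pi - colat ξ) = 0 := intervalIntegral.integral_same
    have := (hFcont.tendsto (Real.pi - colat ξ)).comp hφlim
    rwa [h0] at this
  -- the derivative
  have hGderiv : ∀ t ∈ Set.Ioi (0:ℝ), HasDerivAt G (-(g t)) t := by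
    intro t ht
    have ht0 : (0:ℝ) ≤ t := le_of_lt ht
    have hrt : (0:ℝ) < ‖x - t • ξ‖ := hr t ht0
    have hq2 : ‖x - t • ξ‖^2 = (x 0 - t*ξ 0)^2 + (x 1 - t*ξ 1)^2 + (x 2 - t*ξ 2)^2 := by
      rw [E3_norm_sq]; simp [comp_sub_smul]
    by_cases hax : 0 < (x 0 - t*ξ 0)^2 + (x 1 - t*ξ 1)^2
    · have hD := hasDerivAt_phif x ξ t (hy0 t ht0) hax
      have hcomp := (hFd _).comp t hD
      have hGfun : G = fun u => F (Real.arccos ((x 2 - u * ξ 2) / ‖x - u • ξ‖)) := rfl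
      rw [hGfun]
      refine hcomp.congr_deriv ?_
      symm
      have hgt : g t = ⟪magA a (x - t • ξ), ξ⟫ := rfl
      rw [hgt]
      rw [inner_magA, if_pos (show 0 < ((x - t • ξ) 0)^2 + ((x - t • ξ) 1)^2 by
        simpa only [comp_sub_smul] using hax)]
      rw [hφeq t]
      simp only [comp_sub_smul, φf]
      ring
    · have hs20 : (x 0 - t*ξ 0)^2 + (x 1 - t*ξ 1)^2 = 0 :=
        le_antisymm (not_lt.mp hax) (by positivity)
      have hy2 : (x 2 - t*ξ 2)^2 = ‖x - t • ξ‖^2 := by rw [hq2]; linarith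
      have habs1 : ((x 2 - t*ξ 2) / ‖x - t • ξ‖)^2 = 1 := by
        rw [div_pow, hy2]; field_simp
      have hphi : φf t = 0 ∨ φf t = Real.pi := by
        have h2 : ((x 2 - t*ξ 2) / ‖x - t • ξ‖ - 1) * ((x 2 - t*ξ 2) / ‖x - t • ξ‖ + 1) = 0 := by
          linear_combination habs1
        rcases mul_eq_zero.mp h2 with h | h
        · left
          have : (x 2 - t*ξ 2) / ‖x - t • ξ‖ = 1 := by linarith
          simp [φf, this, Real.arccos_one]
        · right
          have : (x 2 - t*ξ 2) / ‖x - t • ξ‖ = -1 := by linarith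
          simp [φf, this, Real.arccos_neg_one]
      have hnot : φf t ∉ tsupport a := by
        intro hmem
        have hmem2 := hsupp hmem
        rcases hphi with h | h <;> rw [h] at hmem2
        · exact lt_irrefl _ hmem2.1
        · exact lt_irrefl _ hmem2.2
      obtain ⟨ε', hε', hball⟩ : ∃ ε' > 0, Metric.ball (φf t) ε' ⊆ (tsupport a)ᶜ :=
        Metric.isOpen_iff.mp (isClosed_tsupport a).isOpen_compl (φf t) hnot
      have hFc : ∀ u ∈ Metric.ball (φf t) ε', F u = F (φf t) := by
        intro u hu
        have hzero : ∀ z ∈ Set.uIcc (φf t) u, a z = 0 := by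
          intro z hz
          apply image_eq_zero_of_notMem_tsupport
          have hzball : z ∈ Metric.ball (φf t) ε' := by
            rw [Metric.mem_ball, Real.dist_eq] at hu ⊢
            rw [Set.mem_uIcc] at hz
            rw [abs_lt] at hu ⊢
            rcases hz with ⟨h1,h2⟩ | ⟨h1,h2⟩ <;> constructor <;> linarith [hu.1, hu.2]
          intro hmem
          exact (hball hzball) hmem
        have hsub : F u - F (φf t) = ∫ z in (φf t)..u, a z := by
          rw [hFdef]
          simp only
          rw [intervalIntegral.integral_interval_sub_left
            (ha.continuous.intervalIntegrable _ _) (ha.continuous.intervalIntegrable _ _)]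
        have hz0 : (∫ z in (φf t)..u, a z) = 0 := by
          rw [intervalIntegral.integral_congr (g := fun _ => (0:ℝ)) (fun z hz => hzero z hz)]
          simp
        linarith [hsub, hz0]
      have hcontφ : ContinuousAt φf t := by
        show ContinuousAt (fun u : ℝ => Real.arccos ((x 2 - u * ξ 2) / ‖x - u • ξ‖)) t
        have h1 : ContinuousAt (fun u : ℝ => (x 2 - u * ξ 2) / ‖x - u • ξ‖) t :=
          ContinuousAt.div (by fun_prop)
            ((continuous_const.sub (continuous_id.smul continuous_const)).norm.continuousAt)
            (ne_of_gt hrt)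
        exact Real.continuous_arccos.continuousAt.comp h1
      have hev : G =ᶠ[𝓝 t] (fun _ => F (φf t)) := by
        have hmem : ∀ᶠ u in 𝓝 t, φf u ∈ Metric.ball (φf t) ε' :=
          hcontφ (Metric.ball_mem_nhds _ hε')
        filter_upwards [hmem] with u hu
        exact hFc (φf u) hu
      have hd0 : HasDerivAt G 0 t :=
        HasDerivAt.congr_of_eventuallyEq (hasDerivAt_const t (F (φf t))) hev
      convert hd0 using 1
      have hgt : g t = ⟪magA a (x - t • ξ), ξ⟫ := rfl
      rw [hgt]
      rw [inner_magA, if_neg (show ¬ 0 < ((x - t • ξ) 0)^2 + ((x - t • ξ) 1)^2 by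
        simpa only [comp_sub_smul] using hax)]
      simp
  -- conclusion
  have key : (∫ t in Set.Ioi (0:ℝ), -(g t)) = 0 - G 0 :=
    integral_Ioi_of_hasDerivAt_of_tendsto
      ((hGcont 0 Set.self_mem_Ici)) hGderiv hint.neg hGlim
  rw [integral_neg] at key
  have hG0 : G 0 = ∫ φ in (Real.pi - colat ξ)..(colat x), a φ := by
    have : φf 0 = colat x := by simp [φf, colat]
    rw [hGdef]; simp only [this]
    rfl
  constructor
  · rw [integrableOn_Ici_iff_integrableOn_Ioi]
    exact hint
  · rw [MeasureTheory.integral_Ici_eq_integral_Ioi]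
    have : (∫ t in Set.Ioi (0:ℝ), g t) = G 0 := by linarith
    rw [this, hG0]
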